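/- Let U, V be k-dimensional F_q-subspaces of F_{q^n} generating distinct orbits (U ≠ αV for all α ∈ F_{q^n}^*) and having the two-space Sidon property (dim(U ∩ αV) ≤ 1 for all α). Then the number of classes αF_q^* with dim(U ∩ αV) = 1 equals ((q^k−1)/(q−1))^2. -/

import Mathlib

open Module Submodule

lemma aux_span_eq {F M : Type*} [Field F] [AddCommGroup M] [Module F M]
    (L : Submodule F M) (hL : finrank F L = 1) {x : M} (hx : x ∈ L) (hx0 : x ≠ 0) :
    Submodule.span F {x} = L := by
  have : FiniteDimensional F L := Module.finite_of_finrank_eq_succ hL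
  apply Submodule.eq_of_le_of_finrank_eq
  · simpa [Submodule.span_singleton_le_iff_mem] using hx
  · rw [finrank_span_singleton hx0, hL]

lemma aux_exists_rep {F M : Type*} [Field F] [AddCommGroup M] [Module F M]
    (L : Submodule F M) (hL : finrank F L = 1) : ∃ x : M, x ∈ L ∧ x ≠ 0 := by
  have : L ≠ ⊥ := by
    intro h
    rw [h, finrank_bot] at hL; simp at hL
  obtain ⟨x, hx, hx0⟩ := Submodule.exists_mem_ne_zero_of_ne_bot this
  exact ⟨x, hx, hx0⟩

lemma card_lines {F M : Type*} [Field F] [Fintype F] [AddCommGroup M] [Module F M] [Finite M] :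
    Nat.card {L : Submodule F M // finrank F L = 1} * (Fintype.card F - 1)
      = Fintype.card F ^ finrank F M - 1 := by
  classical
  have hFD : FiniteDimensional F M := inferInstance
  -- choose representatives
  have rep : ∀ L : {L : Submodule F M // finrank F L = 1}, {x : M // x ∈ L.1 ∧ x ≠ 0} :=
    fun L => ⟨(aux_exists_rep L.1 L.2).choose, (aux_exists_rep L.1 L.2).choose_spec⟩
  set f : {L : Submodule F M // finrank F L = 1} × {c : F // c ≠ 0} → {x : M // x ≠ 0} :=
    fun p => ⟨p.2.1 • (rep p.1).1, smul_ne_zero p.2.2 (rep p.1).2.2⟩ with hf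
  have hbij : Function.Bijective f := by
    constructor
    · rintro ⟨L₁, c₁⟩ ⟨L₂, c₂⟩ h
      simp only [hf, Subtype.mk.injEq] at h
      have hs1 : Submodule.span F {(rep ⟨L₁.1, L₁.2⟩).1} = L₁.1 :=
        aux_span_eq _ L₁.2 (rep _).2.1 (rep _).2.2
      have hs2 : Submodule.span F {(rep ⟨L₂.1, L₂.2⟩).1} = L₂.1 :=
        aux_span_eq _ L₂.2 (rep _).2.1 (rep _).2.2
      have hLe : L₁ = L₂ := by
        apply Subtype.ext
        rw [← hs1, ← hs2]
        rw [← Submodule.span_singleton_smul_eq (IsUnit.mk0 c₁.1 c₁.2) ((rep L₁).1),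
            ← Submodule.span_singleton_smul_eq (IsUnit.mk0 c₂.1 c₂.2) ((rep L₂).1)]
        rw [h]
      subst hLe
      have : c₁.1 = c₂.1 := smul_left_injective F (rep L₁).2.2 h
      simp [Prod.ext_iff, Subtype.ext this]
    · rintro ⟨x, hx0⟩
      have h1 : finrank F (Submodule.span F {x}) = 1 := finrank_span_singleton hx0
      set L : {L : Submodule F M // finrank F L = 1} := ⟨Submodule.span F {x}, h1⟩
      have hmem : (rep L).1 ∈ Submodule.span F {x} := (rep L).2.1
      obtain ⟨a, ha⟩ := Submodule.mem_span_singleton.mp hmem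
      have ha0 : a ≠ 0 := by
        rintro rfl; exact (rep L).2.2 (by simp [← ha])
      refine ⟨⟨L, ⟨a⁻¹, inv_ne_zero ha0⟩⟩, ?_⟩
      apply Subtype.ext
      simp only [hf]
      rw [← ha, smul_smul, inv_mul_cancel₀ ha0, one_smul]
  have := Nat.card_eq_of_bijective f hbij
  rw [Nat.card_prod] at this
  have hc : Nat.card {c : F // c ≠ 0} = Fintype.card F - 1 := by
    simp [Nat.card_eq_fintype_card, Fintype.card_subtype_compl]
  have hx : Nat.card {x : M // x ≠ 0} = Fintype.card F ^ finrank F M - 1 := by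
    have := Fintype.ofFinite M
    rw [Nat.card_eq_fintype_card, Fintype.card_subtype_compl, card_eq_pow_finrank (K := F) (V := M)]
    simp
  rw [hc] at this
  rw [this, hx]



/-- If `U, V` generate distinct orbits and have the two-space Sidon property,
then the number of classes `αF_q^*` with `dim(U ∩ αV) = 1` equals
`((q^k-1)/(q-1))^2`. -/
theorem stmt_19 (F K : Type) [Field F] [Field K] [Algebra F K]
    [Fintype F] [Fintype K] (q n k : ℕ)
    (hq : Fintype.card F = q) (hn : Module.finrank F K = n)
    (U V : Submodule F K)
    (hkU : Module.finrank F U = k) (hkV : Module.finrank F V = k)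
    (hdistinct : ∀ α : K, α ≠ 0 → U ≠ Submodule.map (LinearMap.mulLeft F α) V)
    (hSidon : ∀ α : K, α ≠ 0 →
      Module.finrank F ↥(U ⊓ Submodule.map (LinearMap.mulLeft F α) V) ≤ 1) :
    Nat.card {W : Submodule F K // ∃ α : K, α ≠ 0 ∧ W = Submodule.span F {α} ∧
        Module.finrank F ↥(U ⊓ Submodule.map (LinearMap.mulLeft F α) V) = 1}
      = ((q ^ k - 1) / (q - 1)) ^ 2 := by
  classical
  -- abbreviations
  set mV : K → Submodule F K := fun α => Submodule.map (LinearMap.mulLeft F α) V with hmV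
  -- membership in α V
  have memmV : ∀ (α x : K), x ∈ mV α ↔ ∃ v ∈ V, α * v = x := by
    intro α x
    simp [hmV, Submodule.mem_map, LinearMap.mulLeft_apply]
  -- the key fact: if u ∈ U, v ∈ V nonzero then finrank (U ⊓ (u v⁻¹) V) = 1
  have key : ∀ u v : K, u ∈ U → v ∈ V → u ≠ 0 → v ≠ 0 →
      Module.finrank F ↥(U ⊓ mV (u * v⁻¹)) = 1 := by
    intro u v hu hv hu0 hv0
    have hα0 : u * v⁻¹ ≠ 0 := mul_ne_zero hu0 (inv_ne_zero hv0)
    refine le_antisymm (hSidon _ hα0) ?_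
    have humem : u ∈ U ⊓ mV (u * v⁻¹) := by
      refine ⟨hu, (memmV _ _).mpr ⟨v, hv, ?_⟩⟩
      field_simp
    have : (U ⊓ mV (u * v⁻¹)) ≠ ⊥ := by
      intro h
      rw [h] at humem
      exact hu0 (by simpa using humem)
    rw [Nat.one_le_iff_ne_zero, ne_eq, Submodule.finrank_eq_zero]
    exact this
  -- lines
  set LU := {L : Submodule F ↥U // finrank F ↥L = 1} with hLU
  set LV := {L : Submodule F ↥V // finrank F ↥L = 1} with hLVdef
  set T := {W : Submodule F K // ∃ α : K, α ≠ 0 ∧ W = Submodule.span F {α} ∧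
        Module.finrank F ↥(U ⊓ mV α) = 1} with hT
  -- representatives
  have repU : ∀ L : LU, {x : ↥U // x ∈ L.1 ∧ x ≠ 0} :=
    fun L => ⟨(aux_exists_rep L.1 L.2).choose, (aux_exists_rep L.1 L.2).choose_spec⟩
  have repV : ∀ L : LV, {x : ↥V // x ∈ L.1 ∧ x ≠ 0} :=
    fun L => ⟨(aux_exists_rep L.1 L.2).choose, (aux_exists_rep L.1 L.2).choose_spec⟩
  have coe_ne : ∀ (x : ↥U), x ≠ 0 → (x : K) ≠ 0 := fun x h => by simpa using h
  have coe_neV : ∀ (x : ↥V), x ≠ 0 → (x : K) ≠ 0 := fun x h => by simpa using h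
  -- the bijection
  set g : LU × LV → T := fun p =>
    ⟨Submodule.span F {((repU p.1).1 : K) * ((repV p.2).1 : K)⁻¹},
      ((repU p.1).1 : K) * ((repV p.2).1 : K)⁻¹,
      mul_ne_zero (coe_ne _ (repU p.1).2.2) (inv_ne_zero (coe_neV _ (repV p.2).2.2)),
      rfl,
      key _ _ (repU p.1).1.2 (repV p.2).1.2 (coe_ne _ (repU p.1).2.2)
        (coe_neV _ (repV p.2).2.2)⟩ with hg
  have hbij : Function.Bijective g := by
    constructor
    · rintro ⟨L₁, M₁⟩ ⟨L₂, M₂⟩ h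
      have hsp : Submodule.span F {((repU L₁).1 : K) * ((repV M₁).1 : K)⁻¹}
          = Submodule.span F {((repU L₂).1 : K) * ((repV M₂).1 : K)⁻¹} := congrArg Subtype.val h
      set u₁ : K := ((repU L₁).1 : K) with hu₁
      set v₁ : K := ((repV M₁).1 : K) with hv₁
      set u₂ : K := ((repU L₂).1 : K) with hu₂
      set v₂ : K := ((repV M₂).1 : K) with hv₂
      have hu₁0 : u₁ ≠ 0 := coe_ne _ (repU L₁).2.2
      have hu₂0 : u₂ ≠ 0 := coe_ne _ (repU L₂).2.2
      have hv₁0 : v₁ ≠ 0 := coe_neV _ (repV M₁).2.2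
      have hv₂0 : v₂ ≠ 0 := coe_neV _ (repV M₂).2.2
      have hα0 : u₁ * v₁⁻¹ ≠ 0 := mul_ne_zero hu₁0 (inv_ne_zero hv₁0)
      -- u₂ v₂⁻¹ = c • (u₁ v₁⁻¹)
      obtain ⟨c, hc⟩ := Submodule.mem_span_singleton.mp
        (hsp ▸ Submodule.mem_span_singleton_self (u₂ * v₂⁻¹))
      have hc0 : c ≠ 0 := by
        rintro rfl
        simp only [zero_smul] at hc
        exact mul_ne_zero hu₂0 (inv_ne_zero hv₂0) hc.symm
      -- both u₁ and u₂ lie in P := U ⊓ (u₁ v₁⁻¹) V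
      have hP1 : finrank F ↥(U ⊓ mV (u₁ * v₁⁻¹)) = 1 :=
        key _ _ (repU L₁).1.2 (repV M₁).1.2 hu₁0 hv₁0
      have hu₁P : u₁ ∈ U ⊓ mV (u₁ * v₁⁻¹) := by
        refine ⟨(repU L₁).1.2, (memmV _ _).mpr ⟨v₁, (repV M₁).1.2, ?_⟩⟩
        field_simp
      have hu₂P : u₂ ∈ U ⊓ mV (u₁ * v₁⁻¹) := by
        refine ⟨(repU L₂).1.2, (memmV _ _).mpr ⟨c • v₂, Submodule.smul_mem _ _ (repV M₂).1.2, ?_⟩⟩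
        rw [Algebra.smul_def] at hc ⊢
        have hac : (algebraMap F K) c ≠ 0 := by
          simpa using hc0
        field_simp at hc ⊢
        linear_combination hc
      -- hence u₂ ∈ span {u₁}
      have hspan1 : Submodule.span F {u₁} = U ⊓ mV (u₁ * v₁⁻¹) := aux_span_eq _ hP1 hu₁P hu₁0
      obtain ⟨d, hd⟩ := Submodule.mem_span_singleton.mp (hspan1 ▸ hu₂P)
      have hd0 : d ≠ 0 := by rintro rfl; rw [zero_smul] at hd; exact hu₂0 hd.symm
      -- L₁ = L₂
      have hLeq : L₁ = L₂ := by
        apply Subtype.ext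
        have h1 : Submodule.span F {(repU L₁).1} = L₁.1 :=
          aux_span_eq _ L₁.2 (repU L₁).2.1 (repU L₁).2.2
        have h2 : Submodule.span F {(repU L₂).1} = L₂.1 :=
          aux_span_eq _ L₂.2 (repU L₂).2.1 (repU L₂).2.2
        rw [← h1, ← h2]
        have : (repU L₂).1 = d • (repU L₁).1 := by
          apply Subtype.ext
          simpa using hd.symm
        rw [this, Submodule.span_singleton_smul_eq (IsUnit.mk0 d hd0)]
      -- v₂ = (d c⁻¹) • v₁
      have hveq : v₂ = (c⁻¹ * d) • v₁ := by
        rw [Algebra.smul_def] at hc hd ⊢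
        have hac : (algebraMap F K) c ≠ 0 := by simpa using hc0
        have had : (algebraMap F K) d ≠ 0 := by simpa using hd0
        rw [map_mul, map_inv₀]
        have h2 : u₁ * ((algebraMap F K) c * v₂) = u₁ * ((algebraMap F K) d * v₁) := by
          field_simp at hc
          rw [← hd] at hc
          linear_combination hc
        have h3 := mul_left_cancel₀ hu₁0 h2
        field_simp
        linear_combination h3
      have hMeq : M₁ = M₂ := by
        apply Subtype.ext
        have h1 : Submodule.span F {(repV M₁).1} = M₁.1 :=
          aux_span_eq _ M₁.2 (repV M₁).2.1 (repV M₁).2.2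
        have h2 : Submodule.span F {(repV M₂).1} = M₂.1 :=
          aux_span_eq _ M₂.2 (repV M₂).2.1 (repV M₂).2.2
        rw [← h1, ← h2]
        have : (repV M₂).1 = (c⁻¹ * d) • (repV M₁).1 := by
          apply Subtype.ext
          simpa using hveq
        rw [this, Submodule.span_singleton_smul_eq (IsUnit.mk0 _ (mul_ne_zero (inv_ne_zero hc0) hd0))]
      rw [Prod.ext_iff]
      exact ⟨hLeq, hMeq⟩
    · rintro ⟨W, α, hα0, hW, h1⟩
      obtain ⟨w, hwP, hw0⟩ := aux_exists_rep _ h1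
      obtain ⟨hwU, hwV⟩ := hwP
      obtain ⟨v, hvV, hv⟩ := (memmV _ _).mp hwV
      have hv0 : v ≠ 0 := by rintro rfl; rw [mul_zero] at hv; exact hw0 hv.symm
      have hfU : finrank F (Submodule.span F {(⟨w, hwU⟩ : ↥U)}) = 1 :=
        finrank_span_singleton (by simpa using hw0)
      have hfV : finrank F (Submodule.span F {(⟨v, hvV⟩ : ↥V)}) = 1 :=
        finrank_span_singleton (by simpa using hv0)
      set L : LU := ⟨Submodule.span F {(⟨w, hwU⟩ : ↥U)}, hfU⟩ with hL
      set M : LV := ⟨Submodule.span F {(⟨v, hvV⟩ : ↥V)}, hfV⟩ with hM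
      refine ⟨(L, M), ?_⟩
      apply Subtype.ext
      show Submodule.span F {((repU L).1 : K) * ((repV M).1 : K)⁻¹} = W
      obtain ⟨c, hcsp⟩ := Submodule.mem_span_singleton.mp (repU L).2.1
      obtain ⟨d, hdsp⟩ := Submodule.mem_span_singleton.mp (repV M).2.1
      have hc0 : c ≠ 0 := by
        rintro rfl; rw [zero_smul] at hcsp; exact (repU L).2.2 hcsp.symm
      have hd0 : d ≠ 0 := by
        rintro rfl; rw [zero_smul] at hdsp; exact (repV M).2.2 hdsp.symm
      have hcoe : ((repU L).1 : K) = c • w := by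
        rw [← hcsp]; simp
      have hdcoe : ((repV M).1 : K) = d • v := by
        rw [← hdsp]; simp
      have hval : ((repU L).1 : K) * ((repV M).1 : K)⁻¹ = (c * d⁻¹) • α := by
        rw [hcoe, hdcoe, Algebra.smul_def, Algebra.smul_def, Algebra.smul_def,
          map_mul, map_inv₀, mul_inv]
        have had : (algebraMap F K) d ≠ 0 := by simpa using hd0
        have : α = w * v⁻¹ := by field_simp [← hv]; exact hv
        rw [this]
        ring
      rw [hval, hW, Submodule.span_singleton_smul_eq (IsUnit.mk0 _ (mul_ne_zero hc0 (inv_ne_zero hd0)))]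
  have hcard : Nat.card T = Nat.card LU * Nat.card LV := by
    rw [← Nat.card_prod]
    exact (Nat.card_eq_of_bijective g hbij).symm
  have hq2 : 1 < q := by rw [← hq]; exact Fintype.one_lt_card
  have hq1 : 0 < q - 1 := by omega
  have hU := card_lines (F := F) (M := ↥U)
  rw [hq, hkU] at hU
  have hV := card_lines (F := F) (M := ↥V)
  rw [hq, hkV] at hV
  have hcU : Nat.card LU = (q ^ k - 1) / (q - 1) := by
    rw [← hU, Nat.mul_div_cancel _ hq1]
  have hcV : Nat.card LV = (q ^ k - 1) / (q - 1) := by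
    rw [← hV, Nat.mul_div_cancel _ hq1]
  show Nat.card T = _
  rw [hcard, hcU, hcV, sq]
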